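/- The Gauss sum ∑_{j=0}^{d-1} ζ^{j²} has modulus √d; equivalently, setting ω = d^{-1/2} ∑_{j=0}^{d-1} ζ^{j²}, one has |ω| = 1. -/

import Mathlib

open Finset Complex

private lemma gauss_per (d : ℕ) (q ζ : ℂ) (hζ0 : ζ ≠ 0) (hqd : q ^ d = 1)
    (hζ2 : ζ ^ 2 = q) (hζd : ζ ^ d ^ 2 = 1) {a b : ℤ} (h : (d:ℤ) ∣ a - b) :
    ζ ^ (a ^ 2) = ζ ^ (b ^ 2) := by
  obtain ⟨t, ht⟩ := h
  have ha : a = b + d * t := by linarith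
  subst ha
  have e : (b + (d:ℤ) * t) ^ 2 = b ^ 2 + (2 * ((d:ℤ) * (t * b)) + ((d^2 : ℕ) : ℤ) * t ^ 2) := by
    push_cast; ring
  rw [e, zpow_add₀ hζ0, zpow_add₀ hζ0]
  have h1 : ζ ^ (2 * ((d:ℤ) * (t * b))) = 1 := by
    rw [zpow_mul, show ζ ^ (2:ℤ) = q by rw [zpow_two, ← hζ2, sq],
      zpow_mul, show q ^ ((d:ℕ):ℤ) = 1 by rw [zpow_natCast, hqd], one_zpow]
  have h2 : ζ ^ (((d^2 : ℕ) : ℤ) * t ^ 2) = 1 := by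
    rw [zpow_mul, zpow_natCast, hζd, one_zpow]
  rw [h1, h2]; ring

private lemma zmod_sum_range (d : ℕ) [NeZero d] (g : ℕ → ℂ) :
    ∑ x : ZMod d, g x.val = ∑ i ∈ Finset.range d, g i := by
  exact Finset.sum_bij' (fun x _ => x.val) (fun i _ => ((i : ZMod d)))
    (fun x _ => Finset.mem_range.mpr (ZMod.val_lt x)) (fun i _ => Finset.mem_univ _)
    (fun x _ => ZMod.natCast_rightInverse x)
    (fun i hi => ZMod.val_cast_of_lt (Finset.mem_range.mp hi)) (fun x _ => rfl)

theorem stmt_1 (d : ℕ) (hd : 1 ≤ d) (q ζ : ℂ)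
    (hq : q = Complex.exp (2 * Real.pi * Complex.I / d))
    (hζ2 : ζ ^ 2 = q) (hζd : ζ ^ d ^ 2 = 1) :
    ‖∑ j ∈ Finset.range d, ζ ^ (j ^ 2)‖ = Real.sqrt d ∧
    ‖(Real.sqrt d : ℂ)⁻¹ * ∑ j ∈ Finset.range d, ζ ^ (j ^ 2)‖ = 1 := by
  haveI : NeZero d := ⟨by omega⟩
  have hζ0 : ζ ≠ 0 := by
    intro h; rw [h, zero_pow (by positivity)] at hζd; exact zero_ne_one hζd
  have hprim : IsPrimitiveRoot q d := by
    rw [hq]; exact Complex.isPrimitiveRoot_exp d (by omega)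
  have hqd : q ^ d = 1 := hprim.pow_eq_one
  have hq0 : q ≠ 0 := by rw [← hζ2]; exact pow_ne_zero _ hζ0
  have habs1 : ‖ζ‖ ^ (d^2) = 1 := by rw [← norm_pow, hζd, norm_one]
  have habs : ‖ζ‖ = 1 := by
    by_contra hne
    rcases lt_or_gt_of_ne hne with h | h
    · have := pow_lt_one₀ (norm_nonneg ζ) h (show d^2 ≠ 0 by positivity)
      rw [habs1] at this; exact lt_irrefl 1 this
    · have := one_lt_pow₀ h (show d^2 ≠ 0 by positivity)
      rw [habs1] at this; exact lt_irrefl 1 this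
  have hconjζ : (starRingEnd ℂ) ζ = ζ⁻¹ := (Complex.inv_eq_conj habs).symm
  have hper := fun {a b : ℤ} (h : (d:ℤ) ∣ a - b) => gauss_per d q ζ hζ0 hqd hζ2 hζd h
  have hnat : ∀ i : ℕ, ζ ^ ((i:ℤ)^2) = ζ ^ (i^2 : ℕ) := by
    intro i; rw [show ((i:ℤ)^2) = ((i^2 : ℕ) : ℤ) by push_cast; ring, zpow_natCast]
  -- S as sum over ZMod d
  have hS : (∑ j ∈ Finset.range d, ζ ^ (j^2)) = ∑ x : ZMod d, ζ ^ (((x.val : ℤ))^2) := by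
    rw [← zmod_sum_range d (fun i => ζ ^ (i^2 : ℕ))]
    exact Finset.sum_congr rfl fun x _ => (hnat x.val).symm
  -- conjugate
  have hconjS : (starRingEnd ℂ) (∑ j ∈ Finset.range d, ζ ^ (j^2)) =
      ∑ x : ZMod d, ζ ^ (-((x.val : ℤ)^2)) := by
    rw [hS, map_sum]
    refine Finset.sum_congr rfl fun x _ => ?_
    rw [map_zpow₀, hconjζ, inv_zpow, ← zpow_neg]
  -- key: S * conj S = d
  have key : (∑ j ∈ Finset.range d, ζ ^ (j^2)) *
      (starRingEnd ℂ) (∑ j ∈ Finset.range d, ζ ^ (j^2)) = (d : ℂ) := by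
    rw [hconjS, hS, Finset.sum_mul_sum]
    -- ∑ x ∑ y, ζ^(x²) * ζ^(-y²)  (careful about which index is which)
    have step1 : ∀ x y : ZMod d,
        ζ ^ ((x.val:ℤ)^2) * ζ ^ (-((y.val:ℤ)^2)) = ζ ^ ((x.val:ℤ)^2 - (y.val:ℤ)^2) := by
      intro x y; rw [← zpow_add₀ hζ0]; ring_nf
    calc (∑ x : ZMod d, ∑ y : ZMod d, ζ ^ ((x.val:ℤ)^2) * ζ ^ (-((y.val:ℤ)^2)))
        = ∑ y : ZMod d, ∑ x : ZMod d, ζ ^ ((x.val:ℤ)^2 - (y.val:ℤ)^2) := by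
          rw [Finset.sum_comm]
          exact Finset.sum_congr rfl fun y _ => Finset.sum_congr rfl fun x _ => step1 x y
      _ = ∑ y : ZMod d, ∑ m : ZMod d, ζ ^ ((m.val:ℤ)^2) * q ^ (y.val * m.val) := by
          refine Finset.sum_congr rfl fun y _ => ?_
          -- reindex x = y + m
          rw [← Fintype.sum_equiv (Equiv.addLeft y)
            (fun m => ζ ^ ((((y + m).val:ℤ))^2 - (y.val:ℤ)^2)) _ (fun m => rfl)]
          refine Finset.sum_congr rfl fun m _ => ?_
          have hmod : (d:ℤ) ∣ ((y + m).val : ℤ) - ((y.val : ℤ) + (m.val : ℤ)) := by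
            have h := ZMod.val_add y m
            refine ⟨-(((y.val : ℤ) + (m.val : ℤ)) / d), ?_⟩
            rw [h]
            push_cast
            rw [Int.emod_def]
            ring
          have e1 : ζ ^ (((y + m).val:ℤ)^2) = ζ ^ (((y.val:ℤ) + (m.val:ℤ))^2) := hper hmod
          have e2 : ((y.val:ℤ) + (m.val:ℤ))^2 - (y.val:ℤ)^2
              = (m.val:ℤ)^2 + 2 * ((y.val:ℤ) * (m.val:ℤ)) := by ring
          rw [sub_eq_add_neg, zpow_add₀ hζ0, e1, ← zpow_add₀ hζ0, ← sub_eq_add_neg, e2,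
            zpow_add₀ hζ0]
          congr 1
          rw [show (2 * ((y.val:ℤ) * (m.val:ℤ))) = (2:ℤ) * ((y.val * m.val : ℕ) : ℤ) by
              push_cast; ring,
            zpow_mul, show ζ ^ (2:ℤ) = q by rw [zpow_two, ← hζ2, sq], zpow_natCast]
      _ = ∑ m : ZMod d, ζ ^ ((m.val:ℤ)^2) * ∑ y : ZMod d, q ^ (y.val * m.val) := by
          rw [Finset.sum_comm]
          exact Finset.sum_congr rfl fun m _ => (Finset.mul_sum _ _ _).symm
      _ = (d : ℂ) := by
          rw [Finset.sum_eq_single 0]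
          · simp only [ZMod.val_zero, Nat.mul_zero, pow_zero, Nat.cast_zero]
            rw [show ((0:ℤ)^2) = 0 by ring, zpow_zero, one_mul, Finset.sum_const,
              Finset.card_univ, ZMod.card, nsmul_eq_mul, mul_one]
          · intro m _ hm
            have hmval : 0 < m.val := by
              rcases Nat.eq_zero_or_pos m.val with h | h
              · exact absurd (by rw [← ZMod.natCast_rightInverse m, h, Nat.cast_zero]) hm
              · exact h
            have hgeo : ∑ y : ZMod d, q ^ (y.val * m.val) = 0 := by
              rw [show (fun y : ZMod d => q ^ (y.val * m.val)) = fun y : ZMod d => (q ^ m.val) ^ y.val by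
                funext y; rw [← pow_mul, Nat.mul_comm]]
              rw [zmod_sum_range d (fun i => ((q ^ m.val) ^ i : ℂ))]
              rw [geom_sum_eq (hprim.pow_ne_one_of_pos_of_lt hmval.ne' (ZMod.val_lt m))]
              rw [← pow_mul, Nat.mul_comm, pow_mul, hqd, one_pow, sub_self, zero_div]
            rw [hgeo, mul_zero]
          · intro h; exact absurd (Finset.mem_univ 0) h
  -- conclude
  have hnormSq : Complex.normSq (∑ j ∈ Finset.range d, ζ ^ (j^2)) = (d : ℝ) := by
    have := Complex.mul_conj (∑ j ∈ Finset.range d, ζ ^ (j^2))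
    rw [key] at this
    exact_mod_cast congrArg Complex.re this.symm
  have habsS : ‖∑ j ∈ Finset.range d, ζ ^ (j^2)‖ = Real.sqrt d := by
    rw [Complex.norm_def, hnormSq]
  refine ⟨habsS, ?_⟩
  rw [norm_mul, habsS, norm_inv, Complex.norm_real, Real.norm_eq_abs,
    _root_.abs_of_nonneg (Real.sqrt_nonneg _), inv_mul_cancel₀]
  exact Real.sqrt_ne_zero'.mpr (by exact_mod_cast Nat.lt_of_lt_of_le Nat.zero_lt_one hd)
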